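/- Let (a_n) be a sequence of positive reals with Σ_n exp(-a_n·τ) < ∞ for every τ > 0, and let α ∈ (0,1). Then the function Φ(t) = Σ_n exp(-a_n·(-t)^α), defined for t < 0, is absolutely monotonic on (-∞,0): all its forward finite differences Δ_h^n Φ(t) with h > 0, t + n·h < 0, are nonnegative. -/

import Mathlib

open Finset Function

/-- Coefficients in the expansion of the iterated derivatives of `t ↦ exp (-a * (-t)^α)`. -/
noncomputable def bcoef (a α : ℝ) : ℕ → ℕ → ℝ
  | 0, k => if k = 0 then 1 else 0
  | (m+1), 0 => (m : ℝ) * bcoef a α m 0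
  | (m+1), (k+1) => ((m : ℝ) - ((k : ℝ)+1)*α) * bcoef a α m (k+1) + a*α * bcoef a α m k

lemma bcoef_eq_zero (a α : ℝ) : ∀ m k, m < k → bcoef a α m k = 0 := by
  intro m
  induction m with
  | zero =>
    intro k hk
    have : k ≠ 0 := by omega
    simp [bcoef, this]
  | succ m IH =>
    intro k hk
    match k, hk with
    | k+1, hk =>
      simp [bcoef, IH (k+1) (by omega), IH k (by omega)]

lemma bcoef_nonneg (a α : ℝ) (ha : 0 < a) (hα0 : 0 < α) (hα1 : α < 1) :
    ∀ m k, 0 ≤ bcoef a α m k := by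
  intro m
  induction m with
  | zero =>
    intro k
    simp only [bcoef]
    split <;> norm_num
  | succ m IH =>
    intro k
    match k with
    | 0 =>
      simp only [bcoef]
      exact mul_nonneg (Nat.cast_nonneg m) (IH 0)
    | k+1 =>
      simp only [bcoef]
      rcases le_or_gt (k+1) m with hle | hlt
      · have hc : ((k:ℝ)+1) ≤ (m:ℝ) := by exact_mod_cast hle
        have h1 : 0 ≤ (m:ℝ) - ((k:ℝ)+1)*α := by nlinarith
        exact add_nonneg (mul_nonneg h1 (IH (k+1)))
          (mul_nonneg (by positivity) (IH k))
      · rw [bcoef_eq_zero a α m (k+1) hlt]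
        have : 0 ≤ a*α * bcoef a α m k := mul_nonneg (by positivity) (IH k)
        linarith

noncomputable def Dfun (a α : ℝ) (m : ℕ) (s : ℝ) : ℝ :=
  ∑ k ∈ Finset.range (m+1),
    bcoef a α m k * (Real.exp (-a * (-s)^α) * (-s)^((k:ℝ)*α - (m:ℝ)))

lemma Dfun_nonneg (a α : ℝ) (ha : 0 < a) (hα0 : 0 < α) (hα1 : α < 1) (m : ℕ)
    {t : ℝ} (ht : t < 0) : 0 ≤ Dfun a α m t := by
  apply Finset.sum_nonneg
  intro k _
  have hu : (0:ℝ) ≤ -t := by linarith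
  exact mul_nonneg (bcoef_nonneg a α ha hα0 hα1 m k)
    (mul_nonneg (Real.exp_nonneg _) (Real.rpow_nonneg hu _))

lemma hasDerivAt_term (a α β : ℝ) {t : ℝ} (ht : t < 0) :
    HasDerivAt (fun s => Real.exp (-a * (-s)^α) * (-s)^β)
      (a*α * (Real.exp (-a * (-t)^α) * (-t)^(α + β - 1))
        - β * (Real.exp (-a * (-t)^α) * (-t)^(β - 1))) t := by
  have hu : (0:ℝ) < -t := by linarith
  have hne : (-t) ≠ 0 := ne_of_gt hu
  have h0 : HasDerivAt (fun s : ℝ => -s) (-1 : ℝ) t := by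
    exact (hasDerivAt_id t).neg
  have h1 : HasDerivAt (fun s : ℝ => (-s)^α) (α * (-t)^(α-1) * (-1)) t :=
    (Real.hasDerivAt_rpow_const (x := -t) (p := α) (Or.inl hne)).comp t h0
  have h2 : HasDerivAt (fun s : ℝ => (-s)^β) (β * (-t)^(β-1) * (-1)) t :=
    (Real.hasDerivAt_rpow_const (x := -t) (p := β) (Or.inl hne)).comp t h0
  have h3 : HasDerivAt (fun s : ℝ => Real.exp (-a * (-s)^α))
      (Real.exp (-a * (-t)^α) * (-a * (α * (-t)^(α-1) * (-1)))) t :=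
    (h1.const_mul (-a)).exp
  have h4 : HasDerivAt (fun s => Real.exp (-a * (-s)^α) * (-s)^β) _ t := h3.mul h2
  convert h4 using 1
  rw [show α + β - 1 = (α - 1) + β by ring, Real.rpow_add hu]
  ring

lemma Dfun_succ_sum (a α : ℝ) (m : ℕ) (P : ℕ → ℝ) :
    ∑ j ∈ Finset.range (m+2), bcoef a α (m+1) j * P j
      = ∑ k ∈ Finset.range (m+1),
          (a * α * bcoef a α m k * P (k+1)
            + ((m:ℝ) - (k:ℝ)*α) * bcoef a α m k * P k) := by
  have hz : bcoef a α m (m+1) = 0 := bcoef_eq_zero a α m (m+1) (lt_add_one m)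
  rw [Finset.sum_range_succ' (fun j => bcoef a α (m+1) j * P j) (m+1)]
  have h1 : ∀ i : ℕ, bcoef a α (m+1) (i+1) * P (i+1)
      = a * α * bcoef a α m i * P (i+1)
        + (((m:ℝ) - ((i:ℝ)+1)*α) * bcoef a α m (i+1)) * P (i+1) := by
    intro i; simp only [bcoef]; ring
  simp only [h1]
  rw [Finset.sum_add_distrib, Finset.sum_add_distrib, add_assoc]
  congr 1
  rw [Finset.sum_range_succ' (fun k => ((m:ℝ) - (k:ℝ)*α) * bcoef a α m k * P k) m,
      Finset.sum_range_succ
        (fun i => (((m:ℝ) - ((i:ℝ)+1)*α) * bcoef a α m (i+1)) * P (i+1)) m,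
      hz]
  simp only [bcoef]
  congr 1
  · rw [mul_zero, zero_mul, add_zero]
    refine Finset.sum_congr rfl fun i _ => ?_
    push_cast
    ring
  · push_cast
    ring

lemma hasDerivAt_Dfun (a α : ℝ) (m : ℕ) {t : ℝ} (ht : t < 0) :
    HasDerivAt (Dfun a α m) (Dfun a α (m+1) t) t := by
  have hu : (0:ℝ) < -t := by linarith
  have h : HasDerivAt (fun s => ∑ k ∈ Finset.range (m+1),
        bcoef a α m k * (Real.exp (-a*(-s)^α) * (-s)^((k:ℝ)*α - (m:ℝ))))
      (∑ k ∈ Finset.range (m+1), bcoef a α m k *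
        (a*α * (Real.exp (-a*(-t)^α) * (-t)^(α + ((k:ℝ)*α - (m:ℝ)) - 1))
          - ((k:ℝ)*α - (m:ℝ)) * (Real.exp (-a*(-t)^α) * (-t)^(((k:ℝ)*α - (m:ℝ)) - 1)))) t :=
    HasDerivAt.fun_sum fun k _ => ((hasDerivAt_term a α ((k:ℝ)*α - (m:ℝ)) ht).const_mul _)
  convert h using 1
  · rfl
  have hD : Dfun a α (m+1) t
      = ∑ j ∈ Finset.range (m+2), bcoef a α (m+1) j *
          (Real.exp (-a*(-t)^α) * (-t)^((j:ℝ)*α - ((m:ℝ)+1))) := by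
    simp only [Dfun, Nat.cast_add, Nat.cast_one]
  rw [hD, Dfun_succ_sum a α m
      (fun j => Real.exp (-a*(-t)^α) * (-t)^((j:ℝ)*α - ((m:ℝ)+1)))]
  refine Finset.sum_congr rfl fun k _ => ?_
  push_cast
  rw [show α + ((k:ℝ)*α - (m:ℝ)) - 1 = ((k:ℝ)+1)*α - ((m:ℝ)+1) by ring,
      show (k:ℝ)*α - (m:ℝ) - 1 = (k:ℝ)*α - ((m:ℝ)+1) by ring]
  ring

lemma fwdDiff_iter_nonneg {h : ℝ} (hh : 0 < h) :
    ∀ (n : ℕ) (c : ℝ) (D : ℕ → ℝ → ℝ),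
      (∀ m t, t < c → HasDerivAt (D m) (D (m+1) t) t) →
      (∀ m t, t < c → 0 ≤ D m t) →
      ∀ t : ℝ, t + (n : ℝ) * h < c → 0 ≤ (fwdDiff h)^[n] (D 0) t := by
  intro n
  induction n with
  | zero =>
    intro c D _ h0 t ht
    simpa using h0 0 t (by simpa using ht)
  | succ n IH =>
    intro c D hD h0 t ht
    rw [Function.iterate_succ_apply]
    have key : fwdDiff h (D 0) = (fun (m : ℕ) (s : ℝ) => D m (s + h) - D m s) 0 := rfl
    rw [key]
    refine IH (c - h) (fun m s => D m (s + h) - D m s) ?_ ?_ t ?_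
    · intro m s hs
      have h1 : HasDerivAt (fun s => D m (s + h)) (D (m+1) (s+h)) s := by
        have := (hD m (s+h) (by linarith)).comp s ((hasDerivAt_id s).add_const h)
        rw [mul_one] at this
        exact this
      exact h1.sub (hD m s (by linarith))
    · intro m s hs
      rw [sub_nonneg]
      have mono : MonotoneOn (D m) (Set.Icc s (s+h)) := by
        apply monotoneOn_of_deriv_nonneg (convex_Icc s (s+h))
        · intro x hx
          exact (hD m x (by linarith [hx.2])).continuousAt.continuousWithinAt
        · intro x hx
          rw [interior_Icc] at hx
          exact (hD m x (by linarith [hx.2])).differentiableAt.differentiableWithinAt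
        · intro x hx
          rw [interior_Icc] at hx
          rw [(hD m x (by linarith [hx.2])).deriv]
          exact h0 (m+1) x (by linarith [hx.2])
      exact mono (Set.left_mem_Icc.2 (by linarith)) (Set.right_mem_Icc.2 (by linarith))
        (by linarith)
    · push_cast at ht ⊢
      linarith

/-- If `a n > 0` with `∑ exp(-a n * τ) < ∞` for all `τ > 0`, and `0 < α < 1`, then
`Φ(t) = ∑ exp(-a n * (-t)^α)` is absolutely monotonic on `(-∞,0)`:
all its forward finite differences are nonnegative. -/
theorem stmt_5 (a : ℕ → ℝ) (hpos : ∀ n, 0 < a n)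
    (hsum : ∀ τ : ℝ, 0 < τ → Summable (fun n => Real.exp (-(a n) * τ)))
    (α : ℝ) (hα : α ∈ Set.Ioo (0 : ℝ) 1) :
    ∀ n : ℕ, ∀ h t : ℝ, 0 < h → t + (n : ℝ) * h < 0 →
      0 ≤ ∑ k ∈ Finset.range (n + 1),
        (-1 : ℝ) ^ (n - k) * (n.choose k : ℝ) *
          ∑' m : ℕ, Real.exp (-(a m) * (-(t + (k : ℝ) * h)) ^ α) := by
  obtain ⟨hα0, hα1⟩ := hα
  intro n h t hh ht
  have hpt : ∀ k ∈ Finset.range (n+1), t + (k:ℝ)*h < 0 := by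
    intro k hk
    rw [Finset.mem_range] at hk
    have hkn : (k:ℝ) ≤ (n:ℝ) := by exact_mod_cast Nat.lt_succ_iff.mp hk
    nlinarith
  have hS : ∀ k ∈ Finset.range (n+1),
      Summable (fun m => Real.exp (-(a m) * (-(t + (k:ℝ)*h))^α)) := by
    intro k hk
    exact hsum _ (Real.rpow_pos_of_pos (by linarith [hpt k hk]) α)
  have swap : ∑ k ∈ Finset.range (n+1), (-1:ℝ)^(n-k) * (n.choose k : ℝ) *
        ∑' m : ℕ, Real.exp (-(a m) * (-(t + (k:ℝ)*h))^α)
      = ∑' m : ℕ, ∑ k ∈ Finset.range (n+1), (-1:ℝ)^(n-k) * (n.choose k : ℝ) *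
          Real.exp (-(a m) * (-(t + (k:ℝ)*h))^α) := by
    calc ∑ k ∈ Finset.range (n+1), (-1:ℝ)^(n-k) * (n.choose k : ℝ) *
            ∑' m : ℕ, Real.exp (-(a m) * (-(t + (k:ℝ)*h))^α)
        = ∑ k ∈ Finset.range (n+1), ∑' m : ℕ, (-1:ℝ)^(n-k) * (n.choose k : ℝ) *
            Real.exp (-(a m) * (-(t + (k:ℝ)*h))^α) :=
          Finset.sum_congr rfl fun k hk => (tsum_mul_left).symm
      _ = _ := (Summable.tsum_finsetSum (fun k hk => ((hS k hk).mul_left _))).symm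
  rw [swap]
  apply tsum_nonneg
  intro m
  have hiter : ∑ k ∈ Finset.range (n+1), (-1:ℝ)^(n-k) * (n.choose k:ℝ) *
        Real.exp (-(a m) * (-(t + (k:ℝ)*h))^α)
      = (fwdDiff h)^[n] (fun s => Real.exp (-(a m) * (-s)^α)) t := by
    rw [fwdDiff_iter_eq_sum_shift]
    refine Finset.sum_congr rfl fun k hk => ?_
    rw [zsmul_eq_mul, nsmul_eq_mul]
    push_cast
    ring
  rw [hiter]
  have hD0 : (fun s => Real.exp (-(a m) * (-s)^α)) = Dfun (a m) α 0 := by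
    funext s
    simp [Dfun, bcoef]
  rw [hD0]
  exact fwdDiff_iter_nonneg hh n 0 (Dfun (a m) α)
    (fun m' s hs => hasDerivAt_Dfun (a m) α m' hs)
    (fun m' s hs => Dfun_nonneg (a m) α (hpos m) hα0 hα1 m' hs)
    t ht
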